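/- arXiv:1907.02415 — 8 statements merged into one kernel-verified Lean document; each statement's English description precedes it below -/
import Mathlib

section
/- The linear map D on gl_2(ℂ) sending e1 ↦ a·e1 + (a-1)·e4, e2 ↦ e2, e3 ↦ e3, e4 ↦ (a-1)·e1 + a·e4 (where e1=E11, e2=E12, e3=E21, e4=E22 and a ∈ ℂ is arbitrary) is a multiplicative Hom-Lie algebra structure on gl_2(ℂ). -/
open Matrix

set_option maxHeartbeats 1000000 in
/-- the map `e1 ↦ a·e1+(a-1)·e4, e2 ↦ e2, e3 ↦ e3,
e4 ↦ (a-1)·e1+a·e4` on `gl₂(ℂ)` is a multiplicative Hom-Lie algebra structure. -/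
theorem stmt1 (a : ℂ)
    (D : Matrix (Fin 2) (Fin 2) ℂ →ₗ[ℂ] Matrix (Fin 2) (Fin 2) ℂ)
    (h1 : D (Matrix.single 0 0 1) =
      a • Matrix.single 0 0 1 + (a - 1) • Matrix.single 1 1 1)
    (h2 : D (Matrix.single 0 1 1) = Matrix.single 0 1 1)
    (h3 : D (Matrix.single 1 0 1) = Matrix.single 1 0 1)
    (h4 : D (Matrix.single 1 1 1) =
      (a - 1) • Matrix.single 0 0 1 + a • Matrix.single 1 1 1) :
    (∀ x y, D ⁅x, y⁆ = ⁅D x, D y⁆) ∧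
      (∀ x y z, ⁅D x, ⁅y, z⁆⁆ + ⁅D y, ⁅z, x⁆⁆ + ⁅D z, ⁅x, y⁆⁆ = 0) := by
  have hdec : ∀ x : Matrix (Fin 2) (Fin 2) ℂ,
      x = x 0 0 • Matrix.single 0 0 1 + x 0 1 • Matrix.single 0 1 1
        + x 1 0 • Matrix.single 1 0 1 + x 1 1 • Matrix.single 1 1 1 := by
    intro x; ext i j
    fin_cases i <;> fin_cases j <;>
      simp [Matrix.single, Matrix.add_apply, Matrix.smul_apply]
  have hD : ∀ x : Matrix (Fin 2) (Fin 2) ℂ,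
      D x = !![a * x 0 0 + (a-1) * x 1 1, x 0 1;
               x 1 0, (a-1) * x 0 0 + a * x 1 1] := by
    intro x
    conv_lhs => rw [hdec x]
    simp only [map_add, LinearMap.map_smul, h1, h2, h3, h4]
    ext i j
    fin_cases i <;> fin_cases j <;> simp [Matrix.single] <;> ring
  have e00 : ∀ x, D x 0 0 = a * x 0 0 + (a-1) * x 1 1 := by intro x; rw [hD]; simp
  have e01 : ∀ x, D x 0 1 = x 0 1 := by intro x; rw [hD]; simp
  have e10 : ∀ x, D x 1 0 = x 1 0 := by intro x; rw [hD]; simp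
  have e11 : ∀ x, D x 1 1 = (a-1) * x 0 0 + a * x 1 1 := by intro x; rw [hD]; simp
  constructor
  · intro x y
    ext i j
    fin_cases i <;> fin_cases j <;>
      simp [Ring.lie_def, e00, e01, e10, e11, Matrix.mul_apply, Matrix.sub_apply,
        Fin.sum_univ_two] <;> ring
  · intro x y z
    ext i j
    fin_cases i <;> fin_cases j <;>
      simp [Ring.lie_def, e00, e01, e10, e11, Matrix.mul_apply, Matrix.sub_apply,
        Matrix.add_apply, Fin.sum_univ_two] <;> ring
end

section
/- Let n ≥ 3 and let D be a multiplicative Hom-Lie algebra structure on gl_n(ℂ) whose restriction to sl_n(ℂ) is the identity. Then D(z) = a·z for some a ∈ ℂ, where z is the identity matrix (a generator of the center); consequently D = diag{1,...,1,a} with respect to a basis of gl_n(ℂ) consisting of a basis of sl_n(ℂ) together with z. -/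
open Matrix

/-- for `n ≥ 3`, a multiplicative Hom-Lie algebra structure on
`gl_n(ℂ)` restricting to the identity on `sl_n(ℂ)` sends the identity matrix
`z = 1` to `a • z` for some `a ∈ ℂ`; hence `D = diag{1,…,1,a}` in a basis
adapted to `gl_n(ℂ) = sl_n(ℂ) ⊕ ℂ·1`. -/
theorem stmt5 (n : ℕ) (hn : 3 ≤ n)
    (D : Matrix (Fin n) (Fin n) ℂ →ₗ[ℂ] Matrix (Fin n) (Fin n) ℂ)
    (hmul : ∀ x y, D ⁅x, y⁆ = ⁅D x, D y⁆)
    (hhj : ∀ x y z, ⁅D x, ⁅y, z⁆⁆ + ⁅D y, ⁅z, x⁆⁆ + ⁅D z, ⁅x, y⁆⁆ = 0)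
    (hsl : ∀ A : Matrix (Fin n) (Fin n) ℂ, A.trace = 0 → D A = A) :
    ∃ a : ℂ, D 1 = a • (1 : Matrix (Fin n) (Fin n) ℂ) := by
  -- D 1 annihilates all brackets under the Lie bracket
  have h0 : ∀ x y : Matrix (Fin n) (Fin n) ℂ, ⁅D 1, ⁅x, y⁆⁆ = 0 := by
    intro x y
    have h := hhj x y 1
    simp only [Ring.lie_def, mul_one, one_mul, sub_self, mul_zero, zero_mul,
      sub_zero, zero_sub, neg_zero, add_zero, zero_add] at h
    simpa [Ring.lie_def] using h
  -- hence D 1 commutes with every off-diagonal std basis matrix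
  have hc : Pairwise fun i j : Fin n =>
      Commute (single i j 1) (D 1) := by
    intro i j hij
    have key : ⁅(single i i 1 : Matrix (Fin n) (Fin n) ℂ),
        (single i j 1 : Matrix (Fin n) (Fin n) ℂ)⁆ =
        (single i j 1 : Matrix (Fin n) (Fin n) ℂ) := by
      simp [Ring.lie_def, (Matrix.single_mul_single_of_ne (c := (1 : ℂ)) i j i hij.symm (1 : ℂ) :
        (single i j 1 : Matrix (Fin n) (Fin n) ℂ) * single i i 1 = 0)]
    have := h0 (single i i 1) (single i j 1 : Matrix (Fin n) (Fin n) ℂ)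
    rw [key, Ring.lie_def, sub_eq_zero] at this
    exact Commute.symm this
  obtain ⟨a, ha⟩ := mem_range_scalar_of_commute_single hc
  exact ⟨a, by rw [← ha]; simp [Matrix.scalar_apply, Matrix.smul_one_eq_diagonal]⟩
end

section
/- Let n ≥ 3 and let D be a multiplicative Hom-Lie algebra structure on gl_n(ℂ) whose restriction to sl_n(ℂ) is zero. Then D(z) lies in the center of gl_n(ℂ), i.e., D(z) = a·z for some a ∈ ℂ, where z is the identity matrix. -/
open Matrix

/-- for `n ≥ 3`, a multiplicative Hom-Lie algebra structure on
`gl_n(ℂ)` restricting to zero on `sl_n(ℂ)` sends the identity matrix `z = 1`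
into the center: `D z = a • z` for some `a ∈ ℂ`. -/
theorem stmt6 (n : ℕ) (hn : 3 ≤ n)
    (D : Matrix (Fin n) (Fin n) ℂ →ₗ[ℂ] Matrix (Fin n) (Fin n) ℂ)
    (hmul : ∀ x y, D ⁅x, y⁆ = ⁅D x, D y⁆)
    (hhj : ∀ x y w, ⁅D x, ⁅y, w⁆⁆ + ⁅D y, ⁅w, x⁆⁆ + ⁅D w, ⁅x, y⁆⁆ = 0)
    (hsl : ∀ A : Matrix (Fin n) (Fin n) ℂ, A.trace = 0 → D A = 0) :
    ∃ a : ℂ, D 1 = a • (1 : Matrix (Fin n) (Fin n) ℂ) := by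
  -- For traceless A, B, the Hom-Jacobi identity gives ⁅D 1, ⁅A, B⁆⁆ = 0.
  have key : ∀ A B : Matrix (Fin n) (Fin n) ℂ, A.trace = 0 → B.trace = 0 →
      ⁅D 1, ⁅A, B⁆⁆ = 0 := by
    intro A B hA hB
    have := hhj 1 A B
    have h0 : ∀ x : Matrix (Fin n) (Fin n) ℂ, ⁅(0 : Matrix (Fin n) (Fin n) ℂ), x⁆ = 0 :=
      fun x => by rw [Ring.lie_def]; simp
    rwa [hsl A hA, hsl B hB, h0, h0, add_zero, add_zero] at this
  -- D 1 commutes with all off-diagonal standard basis matrices.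
  have hcomm : Pairwise fun i j : Fin n =>
      Commute (single i j (1 : ℂ)) (D 1) := by
    intro i j hij
    -- pick k different from i and j
    have hcard : ({i, j} : Finset (Fin n)).card < (Finset.univ : Finset (Fin n)).card := by
      have h2 : ({i, j} : Finset (Fin n)).card ≤ 2 :=
        (Finset.card_insert_le _ _).trans (by simp)
      simpa using lt_of_le_of_lt h2 (by omega : 2 < n)
    have hne : ({i, j} : Finset (Fin n)) ≠ Finset.univ := fun h => by
      rw [h] at hcard; exact lt_irrefl _ hcard
    obtain ⟨k, -, hk⟩ := Finset.exists_of_ssubset (Finset.ssubset_univ_iff.mpr hne)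
    simp only [Finset.mem_insert, Finset.mem_singleton, not_or] at hk
    obtain ⟨hki, hkj⟩ := hk
    have hbr : ⁅single i k (1 : ℂ), single k j (1 : ℂ)⁆ =
        single i j (1 : ℂ) := by
      rw [Ring.lie_def]
      simp [hij.symm]
    have h0 : ⁅D 1, single i j (1 : ℂ)⁆ = 0 := by
      rw [← hbr]
      exact key _ _ (trace_single_eq_of_ne _ _ _ (Ne.symm hki))
        (trace_single_eq_of_ne _ _ _ hkj)
    rw [Ring.lie_def, sub_eq_zero] at h0
    exact h0.symm
  obtain ⟨a, ha⟩ := mem_range_scalar_of_commute_single hcomm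
  exact ⟨a, by rw [← ha, scalar_apply, ← smul_one_eq_diagonal]⟩
end

section
/- Let h_{2n+1}(ℂ) be the Heisenberg Lie algebra with basis z, x_1, y_1, ..., x_n, y_n satisfying [x_i, y_j] = δ_{ij}·z and all other brackets of basis elements zero. For any a,b,c,d,a_1,b_1,...,a_n,b_n ∈ ℂ, the linear map D defined by D(z) = (ad - bc)z, D(x_i) = a_i z + a x_i + c y_i, D(y_i) = b_i z + b x_i + d y_i is a multiplicative Hom-Lie algebra structure on h_{2n+1}(ℂ). -/
/-- on the Heisenberg Lie algebra `h_{2n+1}(ℂ)` (basis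
`z, x_i, y_i` with `⁅x_i, y_j⁆ = δ_{ij} z`, `z` central), the map
`D(a,b,c,d;α)` with `D z = (ad-bc) z`, `D x_i = a_i z + a x_i + c y_i`,
`D y_i = b_i z + b x_i + d y_i` is a multiplicative Hom-Lie structure. -/
theorem stmt7 (n : ℕ) (hn : 0 < n) {L : Type*} [LieRing L] [LieAlgebra ℂ L]
    (bas : Module.Basis (Unit ⊕ Fin n ⊕ Fin n) ℂ L)
    (z : L) (x y : Fin n → L)
    (hz : z = bas (Sum.inl ()))
    (hx : ∀ i, x i = bas (Sum.inr (Sum.inl i)))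
    (hy : ∀ i, y i = bas (Sum.inr (Sum.inr i)))
    (hxy : ∀ i j, ⁅x i, y j⁆ = if i = j then z else 0)
    (hxx : ∀ i j, ⁅x i, x j⁆ = 0) (hyy : ∀ i j, ⁅y i, y j⁆ = 0)
    (hxz : ∀ i, ⁅x i, z⁆ = 0) (hyz : ∀ i, ⁅y i, z⁆ = 0)
    (a b c d : ℂ) (A B : Fin n → ℂ)
    (D : L →ₗ[ℂ] L)
    (hDz : D z = (a * d - b * c) • z)
    (hDx : ∀ i, D (x i) = A i • z + a • x i + c • y i)
    (hDy : ∀ i, D (y i) = B i • z + b • x i + d • y i) :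
    (∀ u v, D ⁅u, v⁆ = ⁅D u, D v⁆) ∧
      (∀ u v w, ⁅D u, ⁅v, w⁆⁆ + ⁅D v, ⁅w, u⁆⁆ + ⁅D w, ⁅u, v⁆⁆ = 0) := by
  have hall : ∀ u : L, u ∈ Submodule.span ℂ (Set.range bas) := by
    intro u; rw [bas.span_eq]; trivial
  have hcz : ∀ u : L, ⁅u, z⁆ = 0 := by
    intro u
    induction hall u using Submodule.span_induction with
    | mem w hw =>
      obtain ⟨i, rfl⟩ := hw
      rcases i with ⟨⟩ | i | i
      · rw [← hz]; exact lie_self z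
      · rw [← hx]; exact hxz i
      · rw [← hy]; exact hyz i
    | zero => exact zero_lie z
    | add u v _ _ hu hv => rw [add_lie, hu, hv, add_zero]
    | smul s u _ hu => rw [smul_lie, hu, smul_zero]
  have hzc : ∀ u : L, ⁅z, u⁆ = 0 := fun u => by
    rw [← lie_skew, hcz, neg_zero]
  have hyx : ∀ i j, ⁅y i, x j⁆ = if j = i then -z else 0 := fun i j => by
    rw [← lie_skew, hxy]; split <;> simp
  -- multiplicativity on basis pairs
  have bcase : ∀ i j : Unit ⊕ Fin n ⊕ Fin n,
      D ⁅bas i, bas j⁆ = ⁅D (bas i), D (bas j)⁆ := by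
    intro i j
    rcases i with ⟨⟩ | i | i <;> rcases j with ⟨⟩ | j | j <;>
      simp only [← hz, ← hx, ← hy] <;>
      simp only [hxy, hxx, hyy, hxz, hyz, hyx, hcz, hzc, lie_self, map_zero, map_smul,
        apply_ite D, hDz, hDx, hDy, lie_add, add_lie, lie_smul, smul_lie, smul_zero,
        zero_add, add_zero, smul_ite, smul_neg, smul_smul, lie_zero, zero_lie] <;>
      split_ifs <;> (try subst_vars) <;> first
        | rfl
        | (match_scalars <;> ring1)
        | (simp_all; match_scalars <;> ring1)
        | simp_all
  -- extend by bilinearity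
  have key : ∀ u v : L, D ⁅u, v⁆ = ⁅D u, D v⁆ := by
    intro u v
    induction hall u using Submodule.span_induction with
    | mem w hw =>
      obtain ⟨i, rfl⟩ := hw
      induction hall v using Submodule.span_induction with
      | mem w' hw' => obtain ⟨j, rfl⟩ := hw'; exact bcase i j
      | zero => simp
      | add p q _ _ hp hq => simp only [lie_add, map_add, hp, hq]
      | smul s p _ hp => simp only [lie_smul, map_smul, hp]
    | zero => simp
    | add p q _ _ hp hq => simp only [add_lie, map_add, hp, hq]
    | smul s p _ hp => simp only [smul_lie, map_smul, hp]
  refine ⟨key, ?_⟩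
  -- every bracket lies in the span of z, and z is central
  have hS : ∀ v w : L, ⁅v, w⁆ ∈ Submodule.span ℂ ({z} : Set L) := by
    intro v w
    induction hall v using Submodule.span_induction with
    | mem p hp =>
      obtain ⟨i, rfl⟩ := hp
      induction hall w using Submodule.span_induction with
      | mem q hq =>
        obtain ⟨j, rfl⟩ := hq
        have hzmem : z ∈ Submodule.span ℂ ({z} : Set L) :=
          Submodule.mem_span_singleton_self z
        rcases i with ⟨⟩ | i | i <;> rcases j with ⟨⟩ | j | j <;>
          simp only [← hz, ← hx, ← hy] <;>
          simp only [hxy, hxx, hyy, hxz, hyz, hyx, hcz, hzc, lie_self] <;>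
          first
            | exact Submodule.zero_mem _
            | (split <;> simp [hzmem, Submodule.zero_mem, Submodule.neg_mem])
      | zero => simp [Submodule.zero_mem]
      | add p q _ _ hp hq => rw [lie_add]; exact Submodule.add_mem _ hp hq
      | smul s p _ hp => rw [lie_smul]; exact Submodule.smul_mem _ s hp
    | zero => simp [Submodule.zero_mem]
    | add p q _ _ hp hq => rw [add_lie]; exact Submodule.add_mem _ hp hq
    | smul s p _ hp => rw [smul_lie]; exact Submodule.smul_mem _ s hp
  have hkill : ∀ t q : L, q ∈ Submodule.span ℂ ({z} : Set L) → ⁅t, q⁆ = 0 := by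
    intro t q hq
    obtain ⟨s, rfl⟩ := Submodule.mem_span_singleton.mp hq
    rw [lie_smul, hcz, smul_zero]
  intro u v w
  rw [hkill _ _ (hS v w), hkill _ _ (hS w u), hkill _ _ (hS u v), add_zero, add_zero]
end

section
/- There exists a nontrivial involutive multiplicative Hom-Lie algebra structure on the Heisenberg Lie algebra h_{2n+1}(ℂ): the linear map D with D(z) = z, D(x_i) = -x_i, D(y_i) = -y_i is a multiplicative Hom-Lie algebra structure satisfying D² = id and D ≠ id. -/
/-- `D z = z`, `D x_i = -x_i`, `D y_i = -y_i` is a nontrivial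
involutive multiplicative Hom-Lie algebra structure on `h_{2n+1}(ℂ)`. -/
theorem stmt9 (n : ℕ) (hn : 0 < n) {L : Type*} [LieRing L] [LieAlgebra ℂ L]
    (bas : Module.Basis (Unit ⊕ Fin n ⊕ Fin n) ℂ L)
    (z : L) (x y : Fin n → L)
    (hz : z = bas (Sum.inl ()))
    (hx : ∀ i, x i = bas (Sum.inr (Sum.inl i)))
    (hy : ∀ i, y i = bas (Sum.inr (Sum.inr i)))
    (hxy : ∀ i j, ⁅x i, y j⁆ = if i = j then z else 0)
    (hxx : ∀ i j, ⁅x i, x j⁆ = 0) (hyy : ∀ i j, ⁅y i, y j⁆ = 0)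
    (hxz : ∀ i, ⁅x i, z⁆ = 0) (hyz : ∀ i, ⁅y i, z⁆ = 0)
    (D : L →ₗ[ℂ] L)
    (hDz : D z = z)
    (hDx : ∀ i, D (x i) = -x i)
    (hDy : ∀ i, D (y i) = -y i) :
    (∀ u v, D ⁅u, v⁆ = ⁅D u, D v⁆) ∧
      (∀ u v w, ⁅D u, ⁅v, w⁆⁆ + ⁅D v, ⁅w, u⁆⁆ + ⁅D w, ⁅u, v⁆⁆ = 0) ∧
      D ∘ₗ D = LinearMap.id ∧ D ≠ LinearMap.id := by
  classical
  -- z is central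
  have key : ∀ u : L, ⁅u, z⁆ = 0 := by
    have h : (LinearMap.mk₂ ℂ (fun u v : L => ⁅u, v⁆) add_lie smul_lie lie_add
        lie_smul).flip z = 0 := by
      apply bas.ext
      rintro (⟨⟩ | i | i) <;>
        simp [LinearMap.flip_apply, LinearMap.mk₂_apply, ← hz, ← hx, ← hy, hxz, hyz]
    intro u
    simpa [LinearMap.flip_apply, LinearMap.mk₂_apply] using LinearMap.congr_fun h u
  have hyx : ∀ i j, ⁅y i, x j⁆ = if j = i then -z else 0 := by
    intro i j
    rw [← neg_neg ⁅y i, x j⁆, ← lie_skew, hxy]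
    split <;> simp
  have hzbr : ∀ u : L, ⁅z, u⁆ = 0 := by
    intro u
    have h : -⁅z, u⁆ = 0 := by rw [lie_skew]; exact key u
    exact neg_eq_zero.mp h
  -- all double brackets vanish
  have key2 : ∀ u v w : L, ⁅u, ⁅v, w⁆⁆ = 0 := by
    intro u
    have h : (LinearMap.mk₂ ℂ (fun v w : L => ⁅u, ⁅v, w⁆⁆)
        (fun a b c => by simp [add_lie])
        (fun c a b => by simp [smul_lie])
        (fun a b c => by simp [lie_add])
        (fun c a b => by simp [lie_smul])) = 0 := by
      apply bas.ext
      rintro (⟨⟩ | i | i) <;> apply bas.ext <;> rintro (⟨⟩ | j | j) <;>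
        simp [LinearMap.mk₂_apply, ← hz, ← hx, ← hy, hxy, hxx, hyy, hxz, hyz, hyx, key, hzbr] <;>
        split <;> simp [key]
    intro v w
    simpa [LinearMap.mk₂_apply] using LinearMap.congr_fun (LinearMap.congr_fun h v) w
  refine ⟨?_, ?_, ?_, ?_⟩
  · -- multiplicativity
    have h : (LinearMap.mk₂ ℂ (fun u v : L => D ⁅u, v⁆)
        (fun a b c => by simp [add_lie])
        (fun c a b => by simp [smul_lie])
        (fun a b c => by simp [lie_add])
        (fun c a b => by simp [lie_smul])) =
        (LinearMap.mk₂ ℂ (fun u v : L => ⁅D u, D v⁆)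
        (fun a b c => by simp [add_lie])
        (fun c a b => by simp [smul_lie])
        (fun a b c => by simp [lie_add])
        (fun c a b => by simp [lie_smul])) := by
      apply bas.ext
      rintro (⟨⟩ | i | i) <;> apply bas.ext <;> rintro (⟨⟩ | j | j) <;>
        simp [LinearMap.mk₂_apply, ← hz, ← hx, ← hy, hxy, hxx, hyy, hxz, hyz, hyx,
          hDz, hDx, hDy, key, hzbr] <;>
        split <;> simp [hDz]
    intro u v
    simpa [LinearMap.mk₂_apply] using LinearMap.congr_fun (LinearMap.congr_fun h u) v
  · intro u v w
    simp [key2]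
  · apply bas.ext
    rintro (⟨⟩ | i | i) <;>
      simp [← hz, ← hx, ← hy, hDz, hDx, hDy]
  · intro hDid
    set i : Fin n := ⟨0, hn⟩
    have h1 : -x i = x i := by rw [← hDx i, hDid]; rfl
    have h2 : (2 : ℂ) • x i = 0 := by
      rw [two_smul]
      nth_rewrite 1 [← h1]
      exact neg_add_cancel _
    have h3 : x i = 0 := by
      rcases smul_eq_zero.mp h2 with h | h
      · norm_num at h
      · exact h
    have := bas.ne_zero (Sum.inr (Sum.inl i))
    rw [← hx i, h3] at this
    exact this rfl
end

section
/- There exists a multiplicative Hom-Lie algebra structure on h_{2n+1}(ℂ) that is not invertible and not zero: namely D with D(z) = 0, D(x_i) = x_i + y_i, D(y_i) = x_i + y_i is a Lie algebra endomorphism satisfying the Hom-Jacobi identity, D ≠ 0, and D is not injective. -/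
/-- `D z = 0`, `D x_i = x_i + y_i`, `D y_i = x_i + y_i` is a
nonzero, non-injective multiplicative Hom-Lie algebra structure on
`h_{2n+1}(ℂ)`. -/
theorem stmt11 (n : ℕ) (hn : 0 < n) {L : Type*} [LieRing L] [LieAlgebra ℂ L]
    (bas : Module.Basis (Unit ⊕ Fin n ⊕ Fin n) ℂ L)
    (z : L) (x y : Fin n → L)
    (hz : z = bas (Sum.inl ()))
    (hx : ∀ i, x i = bas (Sum.inr (Sum.inl i)))
    (hy : ∀ i, y i = bas (Sum.inr (Sum.inr i)))
    (hxy : ∀ i j, ⁅x i, y j⁆ = if i = j then z else 0)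
    (hxx : ∀ i j, ⁅x i, x j⁆ = 0) (hyy : ∀ i j, ⁅y i, y j⁆ = 0)
    (hxz : ∀ i, ⁅x i, z⁆ = 0) (hyz : ∀ i, ⁅y i, z⁆ = 0)
    (D : L →ₗ[ℂ] L)
    (hDz : D z = 0)
    (hDx : ∀ i, D (x i) = x i + y i)
    (hDy : ∀ i, D (y i) = x i + y i) :
    (∀ u v, D ⁅u, v⁆ = ⁅D u, D v⁆) ∧
      (∀ u v w, ⁅D u, ⁅v, w⁆⁆ + ⁅D v, ⁅w, u⁆⁆ + ⁅D w, ⁅u, v⁆⁆ = 0) ∧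
      D ≠ 0 ∧ ¬ Function.Injective D := by
  set adLM : L →ₗ[ℂ] Module.End ℂ L := LinearMap.mk₂ ℂ (fun u v : L => ⁅u, v⁆) add_lie smul_lie lie_add lie_smul with hadLM
  have adapp : ∀ u v : L, adLM u v = ⁅u, v⁆ := fun u v => rfl
  have hzx : ∀ j, ⁅z, x j⁆ = 0 := fun j => by rw [← lie_skew, hxz, neg_zero]
  have hzy : ∀ j, ⁅z, y j⁆ = 0 := fun j => by rw [← lie_skew, hyz, neg_zero]
  have hyx : ∀ i j, ⁅y i, x j⁆ = -(if j = i then z else 0) := fun i j => by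
    rw [← lie_skew, hxy]
  -- z is central
  have hzc : ∀ t : L, ⁅t, z⁆ = 0 := by
    have h0 : adLM.flip z = 0 := by
      refine bas.ext fun i => ?_
      rcases i with _ | i | i
      · show ⁅bas (Sum.inl ()), z⁆ = 0
        rw [← hz, lie_self]
      · show ⁅bas (Sum.inr (Sum.inl i)), z⁆ = 0
        rw [← hx i, hxz]
      · show ⁅bas (Sum.inr (Sum.inr i)), z⁆ = 0
        rw [← hy i, hyz]
    intro t
    exact LinearMap.congr_fun h0 t
  -- D kills brackets of basis elements
  have hbas : ∀ i j, D ⁅bas i, bas j⁆ = 0 := by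
    intro i j
    rcases i with _ | i | i <;> rcases j with _ | j | j
    · rw [← hz, lie_self, map_zero]
    · rw [← hz, ← hx j, hzx, map_zero]
    · rw [← hz, ← hy j, hzy, map_zero]
    · rw [← hz, ← hx i, hxz, map_zero]
    · rw [← hx i, ← hx j, hxx, map_zero]
    · rw [← hx i, ← hy j, hxy]
      split_ifs <;> simp [hDz]
    · rw [← hz, ← hy i, hyz, map_zero]
    · rw [← hy i, ← hx j, hyx, map_neg]
      split_ifs <;> simp [hDz]
    · rw [← hy i, ← hy j, hyy, map_zero]
  have hDbr : ∀ u v : L, D ⁅u, v⁆ = 0 := by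
    have h0 : (adLM.compr₂ D) = 0 := by
      refine bas.ext fun i => bas.ext fun j => ?_
      show D ⁅bas i, bas j⁆ = 0
      exact hbas i j
    intro u v
    exact LinearMap.congr_fun (LinearMap.congr_fun h0 u) v
  -- brackets are central
  have hbrbas : ∀ (t : L) i j, ⁅t, ⁅bas i, bas j⁆⁆ = 0 := by
    intro t i j
    rcases i with _ | i | i <;> rcases j with _ | j | j
    · rw [← hz, lie_self, lie_zero]
    · rw [← hz, ← hx j, hzx, lie_zero]
    · rw [← hz, ← hy j, hzy, lie_zero]
    · rw [← hz, ← hx i, hxz, lie_zero]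
    · rw [← hx i, ← hx j, hxx, lie_zero]
    · rw [← hx i, ← hy j, hxy]
      split_ifs <;> simp [hzc t]
    · rw [← hz, ← hy i, hyz, lie_zero]
    · rw [← hy i, ← hx j, hyx, lie_neg]
      split_ifs <;> simp [hzc t]
    · rw [← hy i, ← hy j, hyy, lie_zero]
  have hbrz : ∀ u v t : L, ⁅t, ⁅u, v⁆⁆ = 0 := by
    intro u v t
    have h0 : (adLM.compr₂ (adLM t)) = 0 := by
      refine bas.ext fun i => bas.ext fun j => ?_
      show ⁅t, ⁅bas i, bas j⁆⁆ = 0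
      exact hbrbas t i j
    exact LinearMap.congr_fun (LinearMap.congr_fun h0 u) v
  -- the span S of x i + y i contains the range of D
  set S : Submodule ℂ L := Submodule.span ℂ (Set.range fun i => x i + y i) with hS
  have hDmem : ∀ u : L, D u ∈ S := by
    intro u
    have hle : (⊤ : Submodule ℂ L) ≤ S.comap D := by
      rw [← bas.span_eq, Submodule.span_le]
      rintro _ ⟨i, rfl⟩
      rcases i with _ | i | i
      · show D (bas (Sum.inl _)) ∈ S
        rw [← hz, hDz]; exact S.zero_mem
      · show D (bas (Sum.inr (Sum.inl i))) ∈ S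
        rw [← hx i, hDx i]; exact Submodule.subset_span (Set.mem_range_self i)
      · show D (bas (Sum.inr (Sum.inr i))) ∈ S
        rw [← hy i, hDy i]; exact Submodule.subset_span (Set.mem_range_self i)
    exact hle Submodule.mem_top
  -- generators of S bracket to zero
  have hgen : ∀ i j, ⁅x i + y i, x j + y j⁆ = (0 : L) := by
    intro i j
    rw [add_lie, lie_add, lie_add, hxx, hyy, hxy, hyx]
    rcases eq_or_ne i j with rfl | hij
    · simp
    · simp [hij, Ne.symm hij]
  -- S is abelian
  have habS : ∀ s ∈ S, ∀ t ∈ S, ⁅s, t⁆ = 0 := by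
    have step1 : ∀ i, ∀ t ∈ S, ⁅x i + y i, t⁆ = 0 := by
      intro i t ht
      have hle : S ≤ LinearMap.ker (adLM (x i + y i)) := by
        rw [hS, Submodule.span_le]
        rintro _ ⟨j, rfl⟩
        exact LinearMap.mem_ker.mpr (hgen i j)
      exact hle ht
    intro s hs t ht
    have hle : S ≤ LinearMap.ker (adLM.flip t) := by
      rw [hS, Submodule.span_le]
      rintro _ ⟨j, rfl⟩
      exact LinearMap.mem_ker.mpr (step1 j t ht)
    exact hle hs
  refine ⟨fun u v => by rw [hDbr u v, habS _ (hDmem u) _ (hDmem v)],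
    fun u v w => by rw [hbrz v w (D u), hbrz w u (D v), hbrz u v (D w)]; simp, ?_, ?_⟩
  · intro h0
    set i0 : Fin n := ⟨0, hn⟩
    have h1 : (0 : L) = x i0 + y i0 := by rw [← hDx i0, h0]; rfl
    have h2 := congrArg (fun v => bas.repr v (Sum.inr (Sum.inl i0))) h1
    simp [hx i0, hy i0, Module.Basis.repr_self, Finsupp.single_apply] at h2
  · intro hinj
    have hz0 : z = 0 := hinj (by rw [hDz, map_zero])
    exact bas.ne_zero _ (hz ▸ hz0)
end

section
/- Let u_2(ℂ) be the Lie algebra of 2×2 upper triangular complex matrices with basis E11, E12, E22. For all a,b,c,d ∈ ℂ, the linear map D defined by D(E11) = a·E11 + b·E12 + a·E22, D(E12) = 0, D(E22) = c·E11 + d·E12 + c·E22 is a multiplicative Hom-Lie algebra structure on u_2(ℂ). -/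
/-- on `u₂(ℂ)` (basis `E11, E12, E22` with `⁅E11,E12⁆ = E12`,
`⁅E12,E22⁆ = E12`, `⁅E11,E22⁆ = 0`), the map `D(E11) = a E11 + b E12 + a E22`,
`D(E12) = 0`, `D(E22) = c E11 + d E12 + c E22` is a multiplicative Hom-Lie
algebra structure. -/
theorem stmt12 {L : Type*} [LieRing L] [LieAlgebra ℂ L]
    (bas : Module.Basis (Fin 3) ℂ L)
    (e11 e12 e22 : L)
    (h0 : e11 = bas 0) (h1 : e12 = bas 1) (h2 : e22 = bas 2)
    (r1 : ⁅e11, e12⁆ = e12) (r2 : ⁅e12, e22⁆ = e12) (r3 : ⁅e11, e22⁆ = 0)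
    (a b c d : ℂ) (D : L →ₗ[ℂ] L)
    (hD11 : D e11 = a • e11 + b • e12 + a • e22)
    (hD12 : D e12 = 0)
    (hD22 : D e22 = c • e11 + d • e12 + c • e22) :
    (∀ u v, D ⁅u, v⁆ = ⁅D u, D v⁆) ∧
      (∀ u v w, ⁅D u, ⁅v, w⁆⁆ + ⁅D v, ⁅w, u⁆⁆ + ⁅D w, ⁅u, v⁆⁆ = 0) := by
  -- every element is a combination of the basis
  have hspan : ∀ u : L, ∃ x0 x1 x2 : ℂ, u = x0 • e11 + x1 • e12 + x2 • e22 := by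
    intro u
    refine ⟨bas.repr u 0, bas.repr u 1, bas.repr u 2, ?_⟩
    rw [h0, h1, h2]
    conv_lhs => rw [← bas.sum_repr u]
    simp only [Fin.sum_univ_three]
  have r1' : ⁅e12, e11⁆ = -e12 := by rw [← lie_skew, r1]
  have r2' : ⁅e22, e12⁆ = -e12 := by rw [← lie_skew, r2]
  have r3' : ⁅e22, e11⁆ = 0 := by rw [← lie_skew, r3, neg_zero]
  -- general bracket formula
  have br : ∀ x0 x1 x2 y0 y1 y2 : ℂ,
      ⁅x0 • e11 + x1 • e12 + x2 • e22, y0 • e11 + y1 • e12 + y2 • e22⁆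
        = (x0 * y1 - x1 * y0 + x1 * y2 - x2 * y1) • e12 := by
    intro x0 x1 x2 y0 y1 y2
    simp only [add_lie, lie_add, smul_lie, lie_smul, r1, r2, r3, r1', r2', r3',
      lie_self, smul_zero, smul_neg, add_zero, zero_add, smul_smul]
    module
  -- image of D on a general element
  have hDgen : ∀ x0 x1 x2 : ℂ,
      D (x0 • e11 + x1 • e12 + x2 • e22)
        = (a * x0 + c * x2) • e11 + (b * x0 + d * x2) • e12
            + (a * x0 + c * x2) • e22 := by
    intro x0 x1 x2
    simp only [map_add, map_smul, hD11, hD12, hD22, smul_zero, smul_add, smul_smul]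
    module
  constructor
  · intro u v
    obtain ⟨x0, x1, x2, hu⟩ := hspan u
    obtain ⟨y0, y1, y2, hv⟩ := hspan v
    rw [hu, hv, br, map_smul, hD12, smul_zero, hDgen, hDgen, br]
    module
  · intro u v w
    have key : ∀ (x : L) (s : ℂ), ⁅D x, s • e12⁆ = 0 := by
      intro x s
      obtain ⟨x0, x1, x2, hx⟩ := hspan x
      have h12 : ⁅D x, e12⁆ = 0 := by
        rw [hx, hDgen]
        simp only [add_lie, smul_lie, r1, r2', lie_self, smul_zero, smul_neg]
        module
      rw [lie_smul, h12, smul_zero]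
    have term : ∀ x y z : L, ⁅D x, ⁅y, z⁆⁆ = 0 := by
      intro x y z
      obtain ⟨y0, y1, y2, hy⟩ := hspan y
      obtain ⟨z0, z1, z2, hz⟩ := hspan z
      rw [hy, hz, br]
      exact key x _
    rw [term, term, term, add_zero, add_zero]
end

section
/- Let g be a Lie algebra and D a multiplicative Hom-Lie algebra structure on g. For each k ∈ ℕ, if δ is a D^k-derivation of (g,D), then D∘δ is a D^{k+1}-derivation; hence left composition with D gives a linear map ρ_D^k : Der_k(g) → Der_{k+1}(g). -/
/-- `δ` is a `D^k`-derivation. -/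
def IsDerK {g : Type*} [LieRing g] [LieAlgebra ℂ g]
    (D : g →ₗ[ℂ] g) (k : ℕ) (δ : g →ₗ[ℂ] g) : Prop :=
  D ∘ₗ δ = δ ∘ₗ D ∧ ∀ x y : g, δ ⁅x, y⁆ = ⁅δ x, (D ^ k) y⁆ + ⁅(D ^ k) x, δ y⁆

/-- if `δ` is a `D^k`-derivation of a multiplicative Hom-Lie
algebra `(g, D)`, then `D ∘ δ` is a `D^{k+1}`-derivation; so left composition
with `D` maps `Der_k(g)` to `Der_{k+1}(g)` (linearly). -/
theorem stmt14 {g : Type*} [LieRing g] [LieAlgebra ℂ g]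
    (D : g →ₗ[ℂ] g)
    (hmul : ∀ x y, D ⁅x, y⁆ = ⁅D x, D y⁆)
    (hhj : ∀ x y z : g, ⁅D x, ⁅y, z⁆⁆ + ⁅D y, ⁅z, x⁆⁆ + ⁅D z, ⁅x, y⁆⁆ = 0) :
    ∀ (k : ℕ) (δ : g →ₗ[ℂ] g), IsDerK D k δ → IsDerK D (k + 1) (D ∘ₗ δ) := by
  intro k δ ⟨hc, hd⟩
  have hc' : ∀ z, D (δ z) = δ (D z) := fun z => LinearMap.congr_fun hc z
  have hck : ∀ z, (D ^ (k + 1)) z = D ((D ^ k) z) := fun z => by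
    rw [pow_succ']; rfl
  constructor
  · ext x
    simp only [LinearMap.coe_comp, Function.comp_apply]
    rw [hc']
  · intro x y
    simp only [LinearMap.coe_comp, Function.comp_apply]
    rw [hd, map_add, hmul, hmul, hck, hck, hc', hc', ← hck, ← hck,
      pow_succ, Module.End.mul_apply, Module.End.mul_apply]
end
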